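/- Let G be a perfect-information stochastic game with finitely many vertices and a tail winning condition W. Then for every vertex v: if v ∈ V_Max then val(v) = max over edges (v,w) ∈ E of val(w); if v ∈ V_min then val(v) = min over edges (v,w) ∈ E of val(w); and if v ∈ V_R then val(v) = Σ_{(v,w)∈E} p(w|v)·val(w). -/

import Mathlib

open MeasureTheory ProbabilityTheory Filter Topology

attribute [local instance] Classical.propDecidable

namespace StochasticGames

/-- A perfect-information stochastic game arena: a partition of the finite vertex set into
Max vertices, min vertices and random vertices, an edge relation such that every vertex has
an outgoing edge, and transition probabilities at random vertices, positive exactly on edges. -/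
structure Game (V : Type) [Fintype V] where
  VMax : Set V
  Vmin : Set V
  VR : Set V
  E : V → V → Prop
  p : V → V → ℝ
  cover : ∀ v, v ∈ VMax ∨ v ∈ Vmin ∨ v ∈ VR
  disjMm : Disjoint VMax Vmin
  disjMR : Disjoint VMax VR
  disjmR : Disjoint Vmin VR
  succ_exists : ∀ v, ∃ w, E v w
  p_nonneg : ∀ v ∈ VR, ∀ w, 0 ≤ p v w
  p_sum : ∀ v ∈ VR, ∑ w, p v w = 1
  p_pos_iff : ∀ v ∈ VR, ∀ w, (0 < p v w ↔ E v w)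

variable {V : Type} [Fintype V] [MeasurableSpace V] [DiscreteMeasurableSpace V]

/-- The cylinder of plays starting with the finite word `h`. -/
def cyl (h : List V) : Set (ℕ → V) :=
  {ω | ∀ i : Fin h.length, ω i = h.get i}

/-- Prepend a finite word to an infinite word. -/
def prepend (h : List V) (q : ℕ → V) : ℕ → V :=
  fun n => if hn : n < h.length then h.get ⟨n, hn⟩ else q (n - h.length)

/-- A winning condition is tail if it is invariant under adding/removing finite prefixes. -/
def IsTail (W : Set (ℕ → V)) : Prop :=
  ∀ (h : List V) (q : ℕ → V), q ∈ W ↔ prepend h q ∈ W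

/-- A finite play: a nonempty word whose consecutive vertices are linked by edges. -/
def Game.FinitePlay (G : Game V) (h : List V) : Prop :=
  h ≠ [] ∧ h.Chain' G.E

/-- A strategy for player Max: after any finite play ending in a Max vertex,
it chooses a successor along an edge. -/
def Game.IsMaxStrategy (G : Game V) (σ : List V → V) : Prop :=
  ∀ h : List V, G.FinitePlay h → ∀ v, h.getLast? = some v → v ∈ G.VMax → G.E v (σ h)

/-- A strategy for player min. -/
def Game.IsMinStrategy (G : Game V) (τ : List V → V) : Prop :=
  ∀ h : List V, G.FinitePlay h → ∀ v, h.getLast? = some v → v ∈ G.Vmin → G.E v (τ h)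

/-- `μ` is the probability measure on plays induced by the initial vertex `v` and the
strategies `σ` (for Max) and `τ` (for min): the play starts at `v` almost surely and,
conditionally on any finite prefix of positive probability, the next vertex is chosen by
`σ`, by `τ`, or according to `G.p`, depending on the owner of the current vertex. -/
def Game.IsInduced (G : Game V) (σ τ : List V → V) (v : V) (μ : Measure (ℕ → V)) : Prop :=
  IsProbabilityMeasure μ ∧
  μ {ω | ω 0 = v} = 1 ∧
  ∀ (h : List V) (u : V), h.getLast? = some u → μ (cyl h) ≠ 0 →
    (u ∈ G.VMax → ProbabilityTheory.cond μ (cyl h) {ω | ω h.length = σ h} = 1) ∧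
    (u ∈ G.Vmin → ProbabilityTheory.cond μ (cyl h) {ω | ω h.length = τ h} = 1) ∧
    (u ∈ G.VR → ∀ w, ProbabilityTheory.cond μ (cyl h) {ω | ω h.length = w} =
      ENNReal.ofReal (G.p u w))

/-- A family of measures indexed by a pair of strategies and an initial vertex. -/
abbrev StratFam (V : Type) [MeasurableSpace V] :=
  (List V → V) → (List V → V) → V → Measure (ℕ → V)

/-- `P` assigns to every pair of strategies and every initial vertex the induced
probability measure on plays. -/
def Game.IsInducedFam (G : Game V) (P : StratFam V) : Prop :=
  ∀ σ τ v, G.IsInduced σ τ v (P σ τ v)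

/-- The value of a vertex: `val(v) = sup_σ inf_τ P^{σ,τ}_v(W)`. -/
noncomputable def Game.val (G : Game V) (W : Set (ℕ → V)) (P : StratFam V) (v : V) : ℝ :=
  ⨆ σ : {σ // G.IsMaxStrategy σ}, ⨅ τ : {τ // G.IsMinStrategy τ}, (P σ.1 τ.1 v W).toReal

/-- An optimal strategy for Max: it guarantees winning with probability `val(v)` from
every vertex `v`. -/
def Game.OptimalMax (G : Game V) (W : Set (ℕ → V)) (P : StratFam V) (σ : List V → V) : Prop :=
  G.IsMaxStrategy σ ∧
  ∀ v, (⨅ τ : {τ // G.IsMinStrategy τ}, (P σ τ.1 v W).toReal) = G.val W P v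

/-- An optimal strategy for min. -/
def Game.OptimalMin (G : Game V) (W : Set (ℕ → V)) (P : StratFam V) (τ : List V → V) : Prop :=
  G.IsMinStrategy τ ∧
  ∀ v, (⨆ σ : {σ // G.IsMaxStrategy σ}, (P σ.1 τ v W).toReal) = G.val W P v

/-- An `ε`-optimal strategy for Max. -/
def Game.EpsOptimalMax (G : Game V) (W : Set (ℕ → V)) (P : StratFam V) (ε : ℝ)
    (σ : List V → V) : Prop :=
  G.IsMaxStrategy σ ∧
  ∀ v, G.val W P v - ε ≤ ⨅ τ : {τ // G.IsMinStrategy τ}, (P σ τ.1 v W).toReal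

/-- A game is consistent if no edge out of a Max or min vertex changes the value. -/
def Game.Consistent (G : Game V) (W : Set (ℕ → V)) (P : StratFam V) : Prop :=
  ∀ v w, G.E v w → (v ∈ G.VMax ∨ v ∈ G.Vmin) → G.val W P v = G.val W P w

/-- The quality of the strategy `σ` after a finite play `v₀ v₁ ⋯ vₙ`:
`inf_τ P^{σ,τ}_{v₀}(W ∣ V₀ = v₀, …, Vₙ = vₙ)`. -/
noncomputable def Game.qual (G : Game V) (W : Set (ℕ → V)) (P : StratFam V)
    (σ : List V → V) : List V → ℝ
  | [] => 0
  | v :: l => ⨅ τ : {τ // G.IsMinStrategy τ},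
      (ProbabilityTheory.cond (P σ τ.1 v) (cyl (v :: l)) W).toReal

/-- The finite play `ω 0, ω 1, …, ω n`. -/
def prefixList (ω : ℕ → V) (n : ℕ) : List V := List.ofFn (fun i : Fin (n + 1) => ω i)

/-- The deviation date: the first time the quality of `σ` drops at least `m/2` below the
value of the current vertex (`∞` if this never happens). -/
noncomputable def Game.resetTime (G : Game V) (W : Set (ℕ → V)) (P : StratFam V)
    (σ : List V → V) (m : ℝ) (ω : ℕ → V) : ℕ∞ :=
  sInf ((fun n : ℕ => (n : ℕ∞)) ''
    {n | G.qual W P σ (prefixList ω n) ≤ G.val W P (ω n) - m / 2})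

/-- The date `t(v₀,…,vₙ)` of the latest deviation before date `n`, along the play `ω`. -/
noncomputable def Game.lastDevAux (G : Game V) (W : Set (ℕ → V)) (P : StratFam V)
    (σ : List V → V) (m : ℝ) (ω : ℕ → V) : ℕ → ℕ
  | 0 => 0
  | n + 1 =>
    let t := G.lastDevAux W P σ m ω n
    if G.val W P (ω (n + 1)) - m / 2 ≤ G.qual W P σ ((prefixList ω (n + 1)).drop t)
    then t else n + 1

/-- The date of the latest deviation, as a function of the finite play `h`. -/
noncomputable def Game.lastDev [Inhabited V] (G : Game V) (W : Set (ℕ → V)) (P : StratFam V)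
    (σ : List V → V) (m : ℝ) (h : List V) : ℕ :=
  G.lastDevAux W P σ m (fun i => h.getD i default) (h.length - 1)

/-- The reset strategy `σ'`: forget everything before the latest deviation and apply `σ`. -/
noncomputable def Game.resetStrat [Inhabited V] (G : Game V) (W : Set (ℕ → V))
    (P : StratFam V) (σ : List V → V) (m : ℝ) : List V → V :=
  fun h => σ (h.drop (G.lastDev W P σ m h))

/-- The σ-algebra generated by the coordinates `V₀, …, Vₙ`. -/
def hist (V : Type) [MeasurableSpace V] (n : ℕ) : MeasurableSpace (ℕ → V) :=
  MeasurableSpace.comap (fun ω (i : Fin (n + 1)) => ω i) inferInstance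

/-- The strategy `σ[h]` shifted by the finite play `h`:
`σ[h](w₀w₁⋯wₖ) = σ(v₀⋯vₙw₁⋯wₖ)` where `h = v₀⋯vₙ`. -/
def shiftStrat (s : List V → V) (h : List V) : List V → V := fun l => s (h ++ l.drop 1)

/-- The function `φ[h]` shifted by the finite play `h`:
`φ[h](w₀w₁w₂⋯) = φ(v₀⋯vₙw₁w₂⋯)` where `h = v₀⋯vₙ`. -/
def shiftFun {α : Type} (φ : (ℕ → V) → α) (h : List V) : (ℕ → V) → α :=
  fun q => φ (prepend h (fun n => q (n + 1)))

/-- A superfluous edge: a move of Max decreasing the value, or a move of min increasing it. -/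
def Game.Superfluous (G : Game V) (W : Set (ℕ → V)) (P : StratFam V) (v w : V) : Prop :=
  (v ∈ G.VMax ∧ G.val W P w < G.val W P v) ∨ (v ∈ G.Vmin ∧ G.val W P v < G.val W P w)

/-! ### Auxiliary development -/

set_option linter.unusedSectionVars false

/-- The shift map on plays. -/
def shift : (ℕ → V) → (ℕ → V) := fun ω n => ω (n + 1)

lemma measurable_shift : Measurable (shift (V := V)) :=
  measurable_pi_lambda _ fun n => measurable_pi_apply (n + 1)

lemma measurableSet_eval (n : ℕ) (w : V) : MeasurableSet {ω : ℕ → V | ω n = w} := by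
  have : {ω : ℕ → V | ω n = w} = (fun ω : ℕ → V => ω n) ⁻¹' {w} := rfl
  rw [this]
  exact (measurable_pi_apply n) (measurableSet_singleton w)

lemma cyl_nil : cyl ([] : List V) = Set.univ := by
  ext ω
  constructor
  · intro _; trivial
  · intro _ i; exact absurd i.2 (by simp)

lemma cyl_singleton (a : V) : cyl [a] = {ω : ℕ → V | ω 0 = a} := by
  ext ω
  constructor
  · intro hω; exact hω ⟨0, by simp⟩
  · intro hω i
    have : (i : ℕ) = 0 := by have h2 : (i : ℕ) < 1 := by simpa using i.2
                             omega
    have h2 : i = ⟨0, by simp⟩ := Fin.ext this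
    rw [h2]; exact hω

lemma cyl_cons (a : V) (h : List V) :
    cyl (a :: h) = {ω : ℕ → V | ω 0 = a} ∩ shift ⁻¹' cyl h := by
  ext ω
  constructor
  · intro hω
    refine ⟨hω ⟨0, by simp⟩, fun i => ?_⟩
    have := hω ⟨(i : ℕ) + 1, by simp [Nat.succ_lt_succ i.2]⟩
    simpa [shift] using this
  · rintro ⟨h0, hs⟩ i
    rcases i with ⟨i, hi⟩
    cases i with
    | zero => exact h0
    | succ j =>
      have := hs ⟨j, by simpa using Nat.lt_of_succ_lt_succ hi⟩
      simpa [shift] using this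

lemma shift_preimage_eval (n : ℕ) (w : V) :
    shift ⁻¹' {ω : ℕ → V | ω n = w} = {ω : ℕ → V | ω (n + 1) = w} := rfl

lemma cyl_append (h : List V) (w : V) :
    cyl (h ++ [w]) = cyl h ∩ {ω : ℕ → V | ω h.length = w} := by
  induction h with
  | nil => simp [cyl_singleton, cyl_nil]
  | cons a t ih =>
    have : (a :: t) ++ [w] = a :: (t ++ [w]) := rfl
    rw [this, cyl_cons, ih, Set.preimage_inter, shift_preimage_eval, cyl_cons]
    simp [Set.inter_assoc, List.length_cons]

lemma measurableSet_cyl (h : List V) : MeasurableSet (cyl h) := by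
  induction h with
  | nil => rw [cyl_nil]; exact MeasurableSet.univ
  | cons a t ih =>
    rw [cyl_cons]
    exact (measurableSet_eval 0 a).inter (measurable_shift ih)

lemma cyl_subset_head (h : List V) (w : V) (hw : h.head? = some w) :
    cyl h ⊆ cyl [w] := by
  cases h with
  | nil => simp at hw
  | cons a t =>
    simp at hw
    subst hw
    rw [cyl_cons, cyl_singleton]
    exact Set.inter_subset_left

/-- A default strategy: always pick some successor of the last vertex. -/
noncomputable def dflt (G : Game V) (v₀ : V) : List V → V :=
  fun h => (G.succ_exists (h.getLastD v₀)).choose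

lemma dflt_spec (G : Game V) (v₀ : V) (h : List V) (u : V) (hu : h.getLast? = some u) :
    G.E u (dflt G v₀ h) := by
  have hd : h.getLastD v₀ = u := by rw [List.getLastD_eq_getLast?, hu]; rfl
  show G.E u ((G.succ_exists (h.getLastD v₀)).choose)
  rw [hd]
  exact (G.succ_exists u).choose_spec

lemma dflt_isMaxStrategy (G : Game V) (v₀ : V) : G.IsMaxStrategy (dflt G v₀) :=
  fun h _ u hu _ => dflt_spec G v₀ h u hu

lemma dflt_isMinStrategy (G : Game V) (v₀ : V) : G.IsMinStrategy (dflt G v₀) :=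
  fun h _ u hu _ => dflt_spec G v₀ h u hu

lemma finitePlay_singleton (G : Game V) (a : V) : G.FinitePlay [a] :=
  ⟨by simp, List.isChain_singleton a⟩

lemma finitePlay_cons (G : Game V) (v w : V) (h : List V) (hh : G.FinitePlay h)
    (hw : h.head? = some w) (he : G.E v w) : G.FinitePlay (v :: h) := by
  cases h with
  | nil => simp at hw
  | cons a t =>
    simp at hw; subst hw
    exact ⟨by simp, List.isChain_cons_cons.2 ⟨he, hh.2⟩⟩

lemma finitePlay_tail (G : Game V) (u w : V) (t : List V) (hh : G.FinitePlay (u :: w :: t)) :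
    G.FinitePlay (w :: t) :=
  ⟨by simp, (List.isChain_cons_cons.1 hh.2).2⟩

lemma finitePlay_append (G : Game V) (h : List V) (u w : V) (hh : G.FinitePlay h)
    (hu : h.getLast? = some u) (he : G.E u w) : G.FinitePlay (h ++ [w]) := by
  refine ⟨by simp, List.isChain_append.2 ⟨hh.2, List.isChain_singleton w, ?_⟩⟩
  intro x hx y hy
  simp at hy
  rw [hu] at hx; simp at hx
  subst hx; subst hy
  exact he

/-- One-step transition weight. -/
noncomputable def step (G : Game V) (σ τ : List V → V) (u : V) (h : List V) (w : V) : ENNReal :=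
  if u ∈ G.VMax then (if σ h = w then 1 else 0)
  else if u ∈ G.Vmin then (if τ h = w then 1 else 0)
  else ENNReal.ofReal (G.p u w)

lemma step_ne_top (G : Game V) (σ τ : List V → V) (u : V) (h : List V) (w : V) :
    step G σ τ u h w ≠ ⊤ := by
  unfold step
  split
  · split <;> simp
  · split
    · split <;> simp
    · exact ENNReal.ofReal_ne_top

/-- The auxiliary weight of a reversed history. -/
noncomputable def wgtRev (G : Game V) (σ τ : List V → V) (v : V) : List V → ENNReal
  | [] => 1
  | [u] => if u = v then 1 else 0
  | w :: u :: r => wgtRev G σ τ v (u :: r) * step G σ τ u ((u :: r).reverse) w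

/-- The weight (probability) of a finite history under given strategies. -/
noncomputable def wgt (G : Game V) (σ τ : List V → V) (v : V) (h : List V) : ENNReal :=
  wgtRev G σ τ v h.reverse

lemma wgt_nil (G : Game V) (σ τ : List V → V) (v : V) : wgt G σ τ v ([] : List V) = 1 := rfl

lemma wgt_singleton (G : Game V) (σ τ : List V → V) (v a : V) :
    wgt G σ τ v ([a]) = if a = v then 1 else 0 := rfl

lemma wgt_append (G : Game V) (σ τ : List V → V) (v : V) (h : List V) (u w : V)
    (hne : h ≠ []) (hu : h.getLast? = some u) :
    wgt G σ τ v (h ++ [w]) = wgt G σ τ v h * step G σ τ u h w := by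
  obtain ⟨a, r, hr⟩ : ∃ a r, h.reverse = a :: r := by
    cases hrev : h.reverse with
    | nil => exact absurd (by simpa using congrArg List.reverse hrev) hne
    | cons a r => exact ⟨a, r, rfl⟩
  have ha : a = u := by
    have : h.reverse.head? = h.getLast? := List.head?_reverse
    rw [hr, hu] at this
    simpa using this
  have hrev2 : (a :: r).reverse = h := by rw [← hr, List.reverse_reverse]
  have : (h ++ [w]).reverse = w :: a :: r := by rw [List.reverse_append, hr]; rfl
  rw [wgt, this, wgtRev, hrev2, ha]
  rw [wgt, ← ha, hr]

lemma meas_inter_eq_cond_mul (μ : Measure (ℕ → V)) [IsProbabilityMeasure μ]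
    (s t : Set (ℕ → V)) (hs : MeasurableSet s) (hne : μ s ≠ 0) :
    μ (s ∩ t) = ProbabilityTheory.cond μ s t * μ s := by
  rw [ProbabilityTheory.cond_apply hs, mul_right_comm,
    ENNReal.inv_mul_cancel hne (measure_ne_top μ s), one_mul]

lemma Game.IsInduced.meas_cyl {G : Game V} {σ τ : List V → V} {v : V} {μ : Measure (ℕ → V)}
    (hμ : G.IsInduced σ τ v μ) : ∀ h : List V, μ (cyl h) = wgt G σ τ v h := by
  haveI : IsProbabilityMeasure μ := hμ.1
  intro h
  induction h using List.reverseRecOn with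
  | nil => rw [cyl_nil, wgt_nil]; exact measure_univ
  | append_singleton l a ih =>
    cases l with
    | nil =>
      rw [List.nil_append, cyl_singleton, wgt_singleton]
      by_cases hav : a = v
      · subst hav; rw [if_pos rfl]; exact hμ.2.1
      · rw [if_neg hav]
        have hsub : {ω : ℕ → V | ω 0 = a} ⊆ {ω : ℕ → V | ω 0 = v}ᶜ := by
          intro ω hω hω'
          exact hav (hω ▸ hω')
        refine le_antisymm ?_ (zero_le)
        calc μ {ω | ω 0 = a} ≤ μ {ω : ℕ → V | ω 0 = v}ᶜ := measure_mono hsub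
          _ = 0 := (prob_compl_eq_zero_iff (measurableSet_eval 0 v)).2 hμ.2.1
    | cons b t =>
      have hne : (b :: t) ≠ [] := by simp
      obtain ⟨u, hu⟩ : ∃ u, (b :: t).getLast? = some u :=
        ⟨(b :: t).getLast hne, List.getLast?_eq_getLast hne⟩
      rw [cyl_append, wgt_append G σ τ v (b :: t) u a hne hu]
      by_cases h0 : μ (cyl (b :: t)) = 0
      · have hw0 : wgt G σ τ v (b :: t) = 0 := ih ▸ h0
        rw [hw0, zero_mul]
        refine le_antisymm ?_ (zero_le)
        calc μ _ ≤ μ (cyl (b :: t)) := measure_mono Set.inter_subset_left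
          _ = 0 := h0
      · have h3 := hμ.2.2 (b :: t) u hu h0
        rw [meas_inter_eq_cond_mul μ (cyl (b :: t)) _ (measurableSet_cyl _) h0, ih]
        have hcond : ProbabilityTheory.cond μ (cyl (b :: t)) {ω | ω (b :: t).length = a}
            = step G σ τ u (b :: t) a := by
          haveI := ProbabilityTheory.cond_isProbabilityMeasure (μ := μ) (s := cyl (b :: t)) h0
          rcases G.cover u with hM | hm | hR
          · rw [step, if_pos hM]
            by_cases ha : σ (b :: t) = a
            · rw [if_pos ha, ← ha]
              exact h3.1 hM
            · rw [if_neg ha]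
              have h1 : ProbabilityTheory.cond μ (cyl (b :: t))
                  {ω : ℕ → V | ω (b :: t).length = σ (b :: t)}ᶜ = 0 :=
                (prob_compl_eq_zero_iff (measurableSet_eval _ _)).2 (h3.1 hM)
              refine le_antisymm ?_ (zero_le)
              calc ProbabilityTheory.cond μ (cyl (b :: t)) {ω | ω (b :: t).length = a}
                  ≤ ProbabilityTheory.cond μ (cyl (b :: t))
                    {ω : ℕ → V | ω (b :: t).length = σ (b :: t)}ᶜ :=
                    measure_mono (fun ω hω hc => ha (hc.symm.trans hω))
                _ = 0 := h1
          · have hnM : u ∉ G.VMax := Set.disjoint_right.1 G.disjMm hm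
            rw [step, if_neg hnM, if_pos hm]
            by_cases ha : τ (b :: t) = a
            · rw [if_pos ha, ← ha]
              exact h3.2.1 hm
            · rw [if_neg ha]
              have h1 : ProbabilityTheory.cond μ (cyl (b :: t))
                  {ω : ℕ → V | ω (b :: t).length = τ (b :: t)}ᶜ = 0 :=
                (prob_compl_eq_zero_iff (measurableSet_eval _ _)).2 (h3.2.1 hm)
              refine le_antisymm ?_ (zero_le)
              calc ProbabilityTheory.cond μ (cyl (b :: t)) {ω | ω (b :: t).length = a}
                  ≤ ProbabilityTheory.cond μ (cyl (b :: t))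
                    {ω : ℕ → V | ω (b :: t).length = τ (b :: t)}ᶜ :=
                    measure_mono (fun ω hω hc => ha (hc.symm.trans hω))
                _ = 0 := h1
          · have hnM : u ∉ G.VMax := Set.disjoint_right.1 G.disjMR hR
            have hnm : u ∉ G.Vmin := Set.disjoint_right.1 G.disjmR hR
            rw [step, if_neg hnM, if_neg hnm]
            exact h3.2.2 hR a
        rw [hcond, mul_comm]

lemma wgt_ne_zero_play {G : Game V} {σ τ : List V → V} (hσ : G.IsMaxStrategy σ)
    (hτ : G.IsMinStrategy τ) (v : V) :
    ∀ h : List V, h ≠ [] → wgt G σ τ v h ≠ 0 → G.FinitePlay h ∧ h.head? = some v := by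
  intro h
  induction h using List.reverseRecOn with
  | nil => intro hne; exact absurd rfl hne
  | append_singleton l a ih =>
    intro _ hw
    cases l with
    | nil =>
      rw [List.nil_append] at hw ⊢
      rw [wgt_singleton] at hw
      have : a = v := by
        by_contra hav; rw [if_neg hav] at hw; exact hw rfl
      subst this
      exact ⟨finitePlay_singleton G a, rfl⟩
    | cons b t =>
      have hne : (b :: t) ≠ [] := by simp
      obtain ⟨u, hu⟩ : ∃ u, (b :: t).getLast? = some u :=
        ⟨(b :: t).getLast hne, List.getLast?_eq_getLast hne⟩
      rw [wgt_append G σ τ v (b :: t) u a hne hu] at hw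
      have hw1 : wgt G σ τ v (b :: t) ≠ 0 := fun h0 => hw (by rw [h0, zero_mul])
      have hw2 : step G σ τ u (b :: t) a ≠ 0 := fun h0 => hw (by rw [h0, mul_zero])
      obtain ⟨hpl, hhd⟩ := ih hne hw1
      have hE : G.E u a := by
        rcases G.cover u with hM | hm | hR
        · rw [step, if_pos hM] at hw2
          have hs : σ (b :: t) = a := by
            by_contra hc; rw [if_neg hc] at hw2; exact hw2 rfl
          exact hs ▸ hσ (b :: t) hpl u hu hM
        · have hnM : u ∉ G.VMax := Set.disjoint_right.1 G.disjMm hm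
          rw [step, if_neg hnM, if_pos hm] at hw2
          have hs : τ (b :: t) = a := by
            by_contra hc; rw [if_neg hc] at hw2; exact hw2 rfl
          exact hs ▸ hτ (b :: t) hpl u hu hm
        · have hnM : u ∉ G.VMax := Set.disjoint_right.1 G.disjMR hR
          have hnm : u ∉ G.Vmin := Set.disjoint_right.1 G.disjmR hR
          rw [step, if_neg hnM, if_neg hnm] at hw2
          have hp : 0 < G.p u a := by
            by_contra hc
            exact hw2 (ENNReal.ofReal_eq_zero.2 (le_of_not_gt hc))
          exact (G.p_pos_iff u hR a).1 hp
      refine ⟨finitePlay_append G (b :: t) u a hpl hu hE, ?_⟩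
      have : (b :: t).head? = some v := hhd
      simpa using this

lemma eval_preimage_eq_iUnion (n : ℕ) (a : V) :
    {ω : ℕ → V | ω n = a} = ⋃ (t : List V) (_ : t.length = n), cyl (t ++ [a]) := by
  ext ω
  simp only [Set.mem_setOf_eq, Set.mem_iUnion]
  constructor
  · intro hω
    refine ⟨List.ofFn (fun i : Fin n => ω i), by simp, ?_⟩
    rw [cyl_append]
    constructor
    · intro i
      simp [List.get_ofFn]
    · simpa using hω
  · rintro ⟨t, ht, hmem⟩
    rw [cyl_append] at hmem
    have := hmem.2
    rw [ht] at this
    exact this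

lemma generateFrom_cyl :
    (inferInstance : MeasurableSpace (ℕ → V)) =
      MeasurableSpace.generateFrom (Set.range (cyl (V := V))) := by
  refine le_antisymm ?_ (MeasurableSpace.generateFrom_le ?_)
  · have hev : ∀ n : ℕ, @Measurable (ℕ → V) V
        (MeasurableSpace.generateFrom (Set.range (cyl (V := V)))) _ (fun ω => ω n) := by
      intro n
      refine @measurable_to_countable' V (ℕ → V) _ _
        (MeasurableSpace.generateFrom (Set.range (cyl (V := V)))) _ ?_
      intro a
      have : (fun ω : ℕ → V => ω n) ⁻¹' {a} = {ω : ℕ → V | ω n = a} := rfl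
      rw [this, eval_preimage_eq_iUnion]
      exact MeasurableSet.iUnion fun t => MeasurableSet.iUnion fun _ =>
        MeasurableSpace.measurableSet_generateFrom ⟨_, rfl⟩
    exact iSup_le fun n => MeasurableSpace.comap_le_iff_le_map.2 (fun s hs => hev n hs)
  · rintro _ ⟨h, rfl⟩
    exact measurableSet_cyl h

lemma isPiSystem_cyl : IsPiSystem (Set.range (cyl (V := V))) := by
  rintro _ ⟨h₁, rfl⟩ _ ⟨h₂, rfl⟩ hne
  obtain ⟨ω, hω1, hω2⟩ := hne
  rcases le_total h₁.length h₂.length with hl | hl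
  · have hsub : cyl h₂ ⊆ cyl h₁ := by
      intro ρ hρ i
      have hi2 : (i : ℕ) < h₂.length := lt_of_lt_of_le i.2 hl
      have e1 := hω1 i
      have e2 := hω2 ⟨i, hi2⟩
      have e3 := hρ ⟨i, hi2⟩
      rw [e3, ← e2, e1] 
    rw [Set.inter_eq_self_of_subset_right hsub]
    exact ⟨h₂, rfl⟩
  · have hsub : cyl h₁ ⊆ cyl h₂ := by
      intro ρ hρ i
      have hi1 : (i : ℕ) < h₁.length := lt_of_lt_of_le i.2 hl
      have e1 := hω2 i
      have e2 := hω1 ⟨i, hi1⟩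
      have e3 := hρ ⟨i, hi1⟩
      rw [e3, ← e2, e1]
    rw [Set.inter_eq_self_of_subset_left hsub]
    exact ⟨h₁, rfl⟩

lemma measure_eq_of_cyl_eq (μ₁ μ₂ : Measure (ℕ → V)) [IsProbabilityMeasure μ₁]
    [IsProbabilityMeasure μ₂] (hcyl : ∀ h : List V, μ₁ (cyl h) = μ₂ (cyl h)) : μ₁ = μ₂ := by
  refine ext_of_generate_finite _ generateFrom_cyl isPiSystem_cyl ?_ ?_
  · rintro s ⟨h, rfl⟩; exact hcyl h
  · simp

lemma Game.IsInduced.congr {G : Game V} {σ₁ τ₁ σ₂ τ₂ : List V → V} {v : V}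
    {μ : Measure (ℕ → V)}
    (hμ : G.IsInduced σ₁ τ₁ v μ) (hσ₁ : G.IsMaxStrategy σ₁) (hτ₁ : G.IsMinStrategy τ₁)
    (hA : ∀ h, G.FinitePlay h → h.head? = some v → σ₁ h = σ₂ h)
    (hB : ∀ h, G.FinitePlay h → h.head? = some v → τ₁ h = τ₂ h) :
    G.IsInduced σ₂ τ₂ v μ := by
  refine ⟨hμ.1, hμ.2.1, ?_⟩
  intro h u hu hne
  have hne' : h ≠ [] := by intro h0; rw [h0] at hu; simp at hu
  have hplay : G.FinitePlay h ∧ h.head? = some v := by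
    refine wgt_ne_zero_play hσ₁ hτ₁ v h hne' ?_
    rw [← hμ.meas_cyl h]; exact hne
  have h3 := hμ.2.2 h u hu hne
  rw [← hA h hplay.1 hplay.2, ← hB h hplay.1 hplay.2]
  exact h3

lemma P_congr {G : Game V} {P : StratFam V} (hP : G.IsInducedFam P)
    {σ₁ τ₁ σ₂ τ₂ : List V → V} {v : V}
    (hσ₁ : G.IsMaxStrategy σ₁) (hτ₁ : G.IsMinStrategy τ₁)
    (hA : ∀ h, G.FinitePlay h → h.head? = some v → σ₁ h = σ₂ h)
    (hB : ∀ h, G.FinitePlay h → h.head? = some v → τ₁ h = τ₂ h) :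
    P σ₁ τ₁ v = P σ₂ τ₂ v := by
  have h1 : G.IsInduced σ₂ τ₂ v (P σ₁ τ₁ v) := (hP σ₁ τ₁ v).congr hσ₁ hτ₁ hA hB
  have h2 := hP σ₂ τ₂ v
  haveI := h1.1
  haveI := h2.1
  refine measure_eq_of_cyl_eq _ _ (fun h => ?_)
  rw [h1.meas_cyl h, h2.meas_cyl h]

/-- Shift a strategy past an initial move `v → w`. -/
noncomputable def shiftPlay (G : Game V) (s : List V → V) (v w : V) : List V → V :=
  fun h => if G.FinitePlay (v :: h) ∧ h.head? = some w then s (v :: h) else dflt G w h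

lemma shiftPlay_isMax {G : Game V} {s : List V → V} (hs : G.IsMaxStrategy s) (v w : V) :
    G.IsMaxStrategy (shiftPlay G s v w) := by
  intro h hh u hu hM
  rw [shiftPlay]
  split
  case isTrue hc =>
    have hu' : (v :: h).getLast? = some u := by
      cases h with
      | nil => simp at hu
      | cons b t => rw [List.getLast?_cons_cons]; exact hu
    exact hs (v :: h) hc.1 u hu' hM
  case isFalse => exact dflt_spec G w h u hu

lemma shiftPlay_isMin {G : Game V} {s : List V → V} (hs : G.IsMinStrategy s) (v w : V) :
    G.IsMinStrategy (shiftPlay G s v w) := by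
  intro h hh u hu hm
  rw [shiftPlay]
  split
  case isTrue hc =>
    have hu' : (v :: h).getLast? = some u := by
      cases h with
      | nil => simp at hu
      | cons b t => rw [List.getLast?_cons_cons]; exact hu
    exact hs (v :: h) hc.1 u hu' hm
  case isFalse => exact dflt_spec G w h u hu

/-- Combine a family of strategies, one per first move, after an initial move at `v`. -/
noncomputable def comb (G : Game V) (v w₀ : V) (s : V → List V → V) : List V → V :=
  fun h => match h with
  | [] => w₀
  | [u] => if u = v then w₀ else dflt G v ([u])
  | u :: w :: t => if u = v then s w (w :: t) else dflt G v (u :: w :: t)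

lemma comb_single (G : Game V) (v w₀ u : V) (s : V → List V → V) :
    comb G v w₀ s ([u]) = if u = v then w₀ else dflt G v ([u]) := rfl

lemma comb_cons (G : Game V) (v w₀ u w : V) (t : List V) (s : V → List V → V) :
    comb G v w₀ s (u :: w :: t) = if u = v then s w (w :: t) else dflt G v (u :: w :: t) := rfl

lemma comb_isMax {G : Game V} {v w₀ : V} {s : V → List V → V}
    (hw₀ : v ∈ G.VMax → G.E v w₀) (hs : ∀ w, G.IsMaxStrategy (s w)) :
    G.IsMaxStrategy (comb G v w₀ s) := by
  intro h hh u hu hM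
  match h with
  | [] => exact absurd rfl hh.1
  | [a] =>
    have ha : a = u := by simpa using hu
    subst ha
    rw [comb_single]
    by_cases hv : a = v
    · rw [if_pos hv]; subst hv; exact hw₀ hM
    · rw [if_neg hv]; exact dflt_spec G v ([a]) _ hu
  | a :: b :: t =>
    have hu' : (b :: t).getLast? = some u := by
      rw [List.getLast?_cons_cons] at hu; exact hu
    rw [comb_cons]
    by_cases hv : a = v
    · rw [if_pos hv]
      exact hs b (b :: t) (finitePlay_tail G a b t hh) u hu' hM
    · rw [if_neg hv]; exact dflt_spec G v _ u hu

lemma comb_isMin {G : Game V} {v w₀ : V} {s : V → List V → V}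
    (hw₀ : v ∈ G.Vmin → G.E v w₀) (hs : ∀ w, G.IsMinStrategy (s w)) :
    G.IsMinStrategy (comb G v w₀ s) := by
  intro h hh u hu hm
  match h with
  | [] => exact absurd rfl hh.1
  | [a] =>
    have ha : a = u := by simpa using hu
    subst ha
    rw [comb_single]
    by_cases hv : a = v
    · rw [if_pos hv]; subst hv; exact hw₀ hm
    · rw [if_neg hv]; exact dflt_spec G v ([a]) _ hu
  | a :: b :: t =>
    have hu' : (b :: t).getLast? = some u := by
      rw [List.getLast?_cons_cons] at hu; exact hu
    rw [comb_cons]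
    by_cases hv : a = v
    · rw [if_pos hv]
      exact hs b (b :: t) (finitePlay_tail G a b t hh) u hu' hm
    · rw [if_neg hv]; exact dflt_spec G v _ u hu

lemma comb_head (G : Game V) (v w₀ : V) (s : V → List V → V) :
    comb G v w₀ s ([v]) = w₀ := by rw [comb_single, if_pos rfl]

lemma shiftPlay_comb_agree {G : Game V} (v w w₀ : V) (s : V → List V → V) (he : G.E v w) :
    ∀ h, G.FinitePlay h → h.head? = some w → shiftPlay G (comb G v w₀ s) v w h = s w h := by
  intro h hh hhd
  cases h with
  | nil => simp at hhd
  | cons b t =>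
    have hb : w = b := Eq.symm (by simpa using hhd)
    subst hb
    rw [shiftPlay, if_pos ⟨finitePlay_cons G v w (w :: t) hh rfl he, rfl⟩,
      comb_cons, if_pos rfl]

lemma cond_map_cyl {μ : Measure (ℕ → V)} [IsProbabilityMeasure μ] (v w : V)
    (hvw : μ (cyl [v, w]) ≠ 0) (h : List V) (hhd : h.head? = some w) :
    Measure.map shift (ProbabilityTheory.cond μ (cyl [v, w])) (cyl h) =
      (μ (cyl [v, w]))⁻¹ * μ (cyl (v :: h)) := by
  rw [Measure.map_apply measurable_shift (measurableSet_cyl h),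
      ProbabilityTheory.cond_apply (measurableSet_cyl [v, w])]
  congr 1
  rw [cyl_cons v h]
  have h2 : cyl [v, w] = {ω : ℕ → V | ω 0 = v} ∩ shift ⁻¹' cyl [w] := cyl_cons v ([w])
  rw [h2, Set.inter_assoc, ← Set.preimage_inter,
      Set.inter_eq_self_of_subset_right (cyl_subset_head h w hhd)]

lemma shift_induced {G : Game V} {σ τ : List V → V} {v : V} {μ : Measure (ℕ → V)}
    (hμ : G.IsInduced σ τ v μ) (hσ : G.IsMaxStrategy σ) (hτ : G.IsMinStrategy τ)
    (w : V) (hw : μ (cyl [v, w]) ≠ 0) :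
    G.IsInduced (shiftPlay G σ v w) (shiftPlay G τ v w) w
      (Measure.map shift (ProbabilityTheory.cond μ (cyl [v, w]))) := by
  haveI : IsProbabilityMeasure μ := hμ.1
  haveI hcp : IsProbabilityMeasure (ProbabilityTheory.cond μ (cyl [v, w])) :=
    ProbabilityTheory.cond_isProbabilityMeasure hw
  have hctop : μ (cyl [v, w]) ≠ ⊤ := measure_ne_top μ _
  haveI hprob : IsProbabilityMeasure
      (Measure.map shift (ProbabilityTheory.cond μ (cyl [v, w]))) :=
    Measure.isProbabilityMeasure_map measurable_shift.aemeasurable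
  refine ⟨hprob, ?_, ?_⟩
  · have e0 : {ω : ℕ → V | ω 0 = w} = cyl [w] := (cyl_singleton w).symm
    rw [e0, cond_map_cyl v w hw ([w]) rfl]
    exact ENNReal.inv_mul_cancel hw hctop
  · intro h u hu hne
    have hne' : h ≠ [] := fun h0 => by rw [h0] at hu; simp at hu
    obtain ⟨b, t, rfl⟩ : ∃ b t, h = b :: t := by
      cases h with
      | nil => exact absurd rfl hne'
      | cons b t => exact ⟨b, t, rfl⟩
    have hb : w = b := by
      by_contra hb
      apply hne
      rw [Measure.map_apply measurable_shift (measurableSet_cyl _),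
          ProbabilityTheory.cond_apply (measurableSet_cyl [v, w])]
      have hempty : cyl [v, w] ∩ shift ⁻¹' cyl (b :: t) = ∅ := by
        rw [Set.eq_empty_iff_forall_notMem]
        rintro ω ⟨hω1, hω2⟩
        have e1 : ω 1 = w := hω1 ⟨1, by simp⟩
        have e2 : ω 1 = b := hω2 ⟨0, by simp⟩
        exact hb (e1.symm.trans e2)
      rw [hempty, measure_empty, mul_zero]
    subst hb
    have hμvh : μ (cyl (v :: w :: t)) ≠ 0 := by
      intro h0
      apply hne
      rw [cond_map_cyl v w hw (w :: t) rfl, h0, mul_zero]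
    have hplay : G.FinitePlay (v :: w :: t) ∧ (v :: w :: t).head? = some v :=
      wgt_ne_zero_play hσ hτ v _ (by simp) (by rw [← hμ.meas_cyl]; exact hμvh)
    have hkey : ∀ x : V,
        ProbabilityTheory.cond (Measure.map shift (ProbabilityTheory.cond μ (cyl [v, w])))
          (cyl (w :: t)) {q | q (w :: t).length = x} =
        ProbabilityTheory.cond μ (cyl (v :: w :: t)) {ω | ω (v :: w :: t).length = x} := by
      intro x
      rw [ProbabilityTheory.cond_apply (measurableSet_cyl (w :: t)),
          ProbabilityTheory.cond_apply (measurableSet_cyl (v :: w :: t))]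
      have e1 : cyl (w :: t) ∩ {q : ℕ → V | q (w :: t).length = x}
          = cyl ((w :: t) ++ [x]) := (cyl_append _ x).symm
      have e2 : cyl (v :: w :: t) ∩ {ω : ℕ → V | ω (v :: w :: t).length = x}
          = cyl ((v :: w :: t) ++ [x]) := (cyl_append _ x).symm
      rw [e1, e2]
      have e3 : Measure.map shift (ProbabilityTheory.cond μ (cyl [v, w]))
          (cyl ((w :: t) ++ [x])) =
          (μ (cyl [v, w]))⁻¹ * μ (cyl ((v :: w :: t) ++ [x])) :=
        cond_map_cyl v w hw _ rfl
      have e4 : Measure.map shift (ProbabilityTheory.cond μ (cyl [v, w])) (cyl (w :: t)) =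
          (μ (cyl [v, w]))⁻¹ * μ (cyl (v :: w :: t)) := cond_map_cyl v w hw _ rfl
      rw [e3, e4]
      rw [ENNReal.mul_inv (Or.inl (ENNReal.inv_ne_zero.2 hctop))
        (Or.inl (ENNReal.inv_ne_top.2 hw)), inv_inv]
      rw [show μ (cyl [v, w]) * (μ (cyl (v :: w :: t)))⁻¹ *
          ((μ (cyl [v, w]))⁻¹ * μ (cyl ((v :: w :: t) ++ [x])))
          = (μ (cyl [v, w]) * (μ (cyl [v, w]))⁻¹) *
            ((μ (cyl (v :: w :: t)))⁻¹ * μ (cyl ((v :: w :: t) ++ [x]))) by ring]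
      rw [ENNReal.mul_inv_cancel hw hctop, one_mul]
    have hu' : (v :: w :: t).getLast? = some u := by
      rw [List.getLast?_cons_cons]; exact hu
    have h3 := hμ.2.2 (v :: w :: t) u hu' hμvh
    refine ⟨fun hM => ?_, fun hm => ?_, fun hR x => ?_⟩
    · have es : shiftPlay G σ v w (w :: t) = σ (v :: w :: t) := by
        rw [shiftPlay, if_pos ⟨hplay.1, rfl⟩]
      rw [es, hkey]
      exact h3.1 hM
    · have es : shiftPlay G τ v w (w :: t) = τ (v :: w :: t) := by
        rw [shiftPlay, if_pos ⟨hplay.1, rfl⟩]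
      rw [es, hkey]
      exact h3.2.1 hm
    · rw [hkey]
      exact h3.2.2 hR x

lemma cyl_pair (v w : V) : cyl [v, w] = {ω : ℕ → V | ω 0 = v ∧ ω 1 = w} := by
  rw [cyl_cons v ([w]), cyl_singleton]
  rfl

lemma prepend_single_shift (v : V) (ω : ℕ → V) (h0 : ω 0 = v) :
    prepend [v] (shift ω) = ω := by
  funext n
  cases n with
  | zero =>
    have : (0 : ℕ) < ([v] : List V).length := by simp
    rw [prepend, dif_pos this]
    exact h0.symm
  | succ m =>
    have : ¬ (m + 1 < ([v] : List V).length) := by simp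
    rw [prepend, dif_neg this]
    rfl

lemma decomp {G : Game V} {W : Set (ℕ → V)} (hW : MeasurableSet W) (hTail : IsTail W)
    {P : StratFam V} (hP : G.IsInducedFam P) {σ τ : List V → V}
    (hσ : G.IsMaxStrategy σ) (hτ : G.IsMinStrategy τ) (v : V) :
    (P σ τ v W).toReal = ∑ w : V, (wgt G σ τ v ([v, w])).toReal *
      (P (shiftPlay G σ v w) (shiftPlay G τ v w) w W).toReal := by
  have hμ := hP σ τ v
  haveI : IsProbabilityMeasure (P σ τ v) := hμ.1
  -- Step A : decompose the measure of W over the second coordinate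
  have hA : P σ τ v W = ∑ w : V, P σ τ v (W ∩ cyl [v, w]) := by
    have hA0 : P σ τ v {ω : ℕ → V | ω 0 = v}ᶜ = 0 :=
      (prob_compl_eq_zero_iff (measurableSet_eval 0 v)).2 hμ.2.1
    have hWA : P σ τ v W = P σ τ v (W ∩ {ω : ℕ → V | ω 0 = v}) := by
      refine le_antisymm ?_ (measure_mono Set.inter_subset_left)
      calc P σ τ v W
          ≤ P σ τ v (W ∩ {ω : ℕ → V | ω 0 = v}) +
            P σ τ v (W \ {ω : ℕ → V | ω 0 = v}) :=
            measure_le_inter_add_diff _ _ _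
        _ ≤ P σ τ v (W ∩ {ω : ℕ → V | ω 0 = v}) + P σ τ v {ω : ℕ → V | ω 0 = v}ᶜ :=
            add_le_add le_rfl (measure_mono (Set.diff_subset_compl _ _))
        _ = P σ τ v (W ∩ {ω : ℕ → V | ω 0 = v}) := by rw [hA0, add_zero]
    have hUnion : W ∩ {ω : ℕ → V | ω 0 = v} = ⋃ w : V, (W ∩ cyl [v, w]) := by
      ext ω
      simp only [Set.mem_inter_iff, Set.mem_setOf_eq, Set.mem_iUnion, cyl_pair]
      constructor
      · rintro ⟨hωW, h0⟩
        exact ⟨ω 1, hωW, h0, rfl⟩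
      · rintro ⟨w, hωW, h0, _⟩
        exact ⟨hωW, h0⟩
    have hdisj : Pairwise (Function.onFun Disjoint fun w : V => W ∩ cyl [v, w]) := by
      intro w w' hww'
      refine Set.disjoint_left.2 ?_
      rintro ω ⟨_, hω1⟩ ⟨_, hω2⟩
      rw [cyl_pair] at hω1 hω2
      exact hww' (hω1.2.symm.trans hω2.2)
    rw [hWA, hUnion, measure_iUnion hdisj
      (fun w => hW.inter (measurableSet_cyl _)), tsum_fintype]
  -- Step B : each term
  have hB : ∀ w : V, P σ τ v (W ∩ cyl [v, w]) =
      wgt G σ τ v ([v, w]) * P (shiftPlay G σ v w) (shiftPlay G τ v w) w W := by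
    intro w
    by_cases h0 : P σ τ v (cyl [v, w]) = 0
    · have hw0 : wgt G σ τ v ([v, w]) = 0 := hμ.meas_cyl [v, w] ▸ h0
      rw [hw0, zero_mul]
      refine le_antisymm ?_ (zero_le)
      calc P σ τ v (W ∩ cyl [v, w]) ≤ P σ τ v (cyl [v, w]) :=
            measure_mono Set.inter_subset_right
        _ = 0 := h0
    · have hset : W ∩ cyl [v, w] = cyl [v, w] ∩ shift ⁻¹' W := by
        ext ω
        simp only [Set.mem_inter_iff, Set.mem_preimage]
        have hiff : ω ∈ cyl [v, w] → (ω ∈ W ↔ shift ω ∈ W) := by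
          intro hω
          have h0' : ω 0 = v := by
            rw [cyl_pair] at hω; exact hω.1
          rw [hTail [v] (shift ω), prepend_single_shift v ω h0']
        constructor
        · rintro ⟨h1, h2⟩
          exact ⟨h2, (hiff h2).1 h1⟩
        · rintro ⟨h1, h2⟩
          exact ⟨(hiff h1).2 h2, h1⟩
      rw [hset, meas_inter_eq_cond_mul _ _ _ (measurableSet_cyl _) h0]
      have hmap : ProbabilityTheory.cond (P σ τ v) (cyl [v, w]) (shift ⁻¹' W) =
          Measure.map shift (ProbabilityTheory.cond (P σ τ v) (cyl [v, w])) W :=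
        (Measure.map_apply measurable_shift hW).symm
      have h8 := shift_induced hμ hσ hτ w h0
      have h9 := hP (shiftPlay G σ v w) (shiftPlay G τ v w) w
      haveI := h8.1
      haveI := h9.1
      have hmeq : Measure.map shift (ProbabilityTheory.cond (P σ τ v) (cyl [v, w])) =
          P (shiftPlay G σ v w) (shiftPlay G τ v w) w :=
        measure_eq_of_cyl_eq _ _ (fun h => by rw [h8.meas_cyl h, h9.meas_cyl h])
      rw [hmap, hmeq, hμ.meas_cyl [v, w], mul_comm]
  rw [hA]
  rw [ENNReal.toReal_sum (fun w _ => measure_ne_top _ _)]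
  congr 1
  funext w
  rw [hB w, ENNReal.toReal_mul]

lemma wgt_pair (G : Game V) (σ τ : List V → V) (v w : V) :
    wgt G σ τ v ([v, w]) = step G σ τ v ([v]) w := by
  have h1 : ([v, w] : List V) = [v] ++ [w] := rfl
  rw [h1, wgt_append G σ τ v ([v]) v w (by simp) rfl, wgt_singleton, if_pos rfl, one_mul]

lemma collapse_max {G : Game V} {W : Set (ℕ → V)} (hW : MeasurableSet W) (hTail : IsTail W)
    {P : StratFam V} (hP : G.IsInducedFam P) {σ τ : List V → V}
    (hσ : G.IsMaxStrategy σ) (hτ : G.IsMinStrategy τ) {v : V} (hvM : v ∈ G.VMax) :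
    (P σ τ v W).toReal = (P (shiftPlay G σ v (σ ([v]))) (shiftPlay G τ v (σ ([v])))
      (σ ([v])) W).toReal := by
  rw [decomp hW hTail hP hσ hτ v]
  rw [Finset.sum_eq_single (σ ([v]))]
  · rw [wgt_pair, step, if_pos hvM, if_pos rfl]
    simp
  · intro w _ hww
    rw [wgt_pair, step, if_pos hvM, if_neg (fun e => hww e.symm)]
    simp
  · intro hmem
    exact absurd (Finset.mem_univ _) hmem

lemma collapse_min {G : Game V} {W : Set (ℕ → V)} (hW : MeasurableSet W) (hTail : IsTail W)
    {P : StratFam V} (hP : G.IsInducedFam P) {σ τ : List V → V}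
    (hσ : G.IsMaxStrategy σ) (hτ : G.IsMinStrategy τ) {v : V} (hvm : v ∈ G.Vmin) :
    (P σ τ v W).toReal = (P (shiftPlay G σ v (τ ([v]))) (shiftPlay G τ v (τ ([v])))
      (τ ([v])) W).toReal := by
  have hnM : v ∉ G.VMax := Set.disjoint_right.1 G.disjMm hvm
  rw [decomp hW hTail hP hσ hτ v]
  rw [Finset.sum_eq_single (τ ([v]))]
  · rw [wgt_pair, step, if_neg hnM, if_pos hvm, if_pos rfl]
    simp
  · intro w _ hww
    rw [wgt_pair, step, if_neg hnM, if_pos hvm, if_neg (fun e => hww e.symm)]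
    simp
  · intro hmem
    exact absurd (Finset.mem_univ _) hmem

lemma collapse_R {G : Game V} {W : Set (ℕ → V)} (hW : MeasurableSet W) (hTail : IsTail W)
    {P : StratFam V} (hP : G.IsInducedFam P) {σ τ : List V → V}
    (hσ : G.IsMaxStrategy σ) (hτ : G.IsMinStrategy τ) {v : V} (hvR : v ∈ G.VR) :
    (P σ τ v W).toReal = ∑ w : V, G.p v w *
      (P (shiftPlay G σ v w) (shiftPlay G τ v w) w W).toReal := by
  have hnM : v ∉ G.VMax := Set.disjoint_right.1 G.disjMR hvR
  have hnm : v ∉ G.Vmin := Set.disjoint_right.1 G.disjmR hvR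
  rw [decomp hW hTail hP hσ hτ v]
  congr 1
  funext w
  rw [wgt_pair, step, if_neg hnM, if_neg hnm,
    ENNReal.toReal_ofReal (G.p_nonneg v hvR w)]

set_option maxHeartbeats 2000000 in
/-- in a game with a tail winning condition, the value is a fixed point of the
one-step (max / min / average) operator. -/
theorem val_fixed_point
    (G : Game V) (W : Set (ℕ → V)) (hW : MeasurableSet W) (hTail : IsTail W)
    (P : StratFam V) (hP : G.IsInducedFam P) (v : V) :
    (v ∈ G.VMax → G.val W P v = ⨆ w : {w // G.E v w}, G.val W P w.1) ∧
    (v ∈ G.Vmin → G.val W P v = ⨅ w : {w // G.E v w}, G.val W P w.1) ∧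
    (v ∈ G.VR → G.val W P v =
      ∑ w ∈ Finset.univ.filter (fun w => G.E v w), G.p v w * G.val W P w) := by
  haveI hNmax : Nonempty {σ : List V → V // G.IsMaxStrategy σ} :=
    ⟨⟨dflt G v, dflt_isMaxStrategy G v⟩⟩
  haveI hNmin : Nonempty {τ : List V → V // G.IsMinStrategy τ} :=
    ⟨⟨dflt G v, dflt_isMinStrategy G v⟩⟩
  haveI hNsucc : Nonempty {w // G.E v w} :=
    ⟨⟨(G.succ_exists v).choose, (G.succ_exists v).choose_spec⟩⟩
  have hvaldef : ∀ u : V, G.val W P u = ⨆ σ : {σ : List V → V // G.IsMaxStrategy σ},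
      ⨅ τ : {τ : List V → V // G.IsMinStrategy τ}, (P σ.1 τ.1 u W).toReal := fun _ => rfl
  have hF0 : ∀ (σ τ : List V → V) (u : V), (0 : ℝ) ≤ (P σ τ u W).toReal :=
    fun _ _ _ => ENNReal.toReal_nonneg
  have hF1 : ∀ (σ τ : List V → V) (u : V), (P σ τ u W).toReal ≤ 1 := by
    intro σ τ u
    haveI := (hP σ τ u).1
    have h1 : P σ τ u W ≤ 1 := prob_le_one
    have h2 := ENNReal.toReal_mono (by simp) h1
    simpa using h2
  have hbddB : ∀ (σ : List V → V) (u : V),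
      BddBelow (Set.range fun τ : {τ : List V → V // G.IsMinStrategy τ} =>
        (P σ τ.1 u W).toReal) := by
    intro σ u
    exact ⟨0, by rintro x ⟨τ, rfl⟩; exact hF0 _ _ _⟩
  have hbddA : ∀ u : V, BddAbove (Set.range fun σ : {σ : List V → V // G.IsMaxStrategy σ} =>
      ⨅ τ : {τ : List V → V // G.IsMinStrategy τ}, (P σ.1 τ.1 u W).toReal) := by
    intro u
    refine ⟨1, ?_⟩
    rintro x ⟨σ, rfl⟩
    exact ciInf_le_of_le (hbddB _ _) (Classical.arbitrary _) (hF1 _ _ _)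
  have hval0 : ∀ u : V, 0 ≤ G.val W P u := by
    intro u
    rw [hvaldef u]
    exact le_ciSup_of_le (hbddA u) (Classical.arbitrary _) (le_ciInf fun τ => hF0 _ _ _)
  have hvalIinf_le : ∀ (σ : List V → V), G.IsMaxStrategy σ → ∀ u : V,
      (⨅ τ : {τ : List V → V // G.IsMinStrategy τ}, (P σ τ.1 u W).toReal) ≤ G.val W P u := by
    intro σ hσ u
    rw [hvaldef u]
    exact le_ciSup (hbddA u) (⟨σ, hσ⟩ : {σ : List V → V // G.IsMaxStrategy σ})
  refine ⟨fun hvM => ?_, fun hvm => ?_, fun hvR => ?_⟩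
  · -- Max vertex
    have hsuccBddA : BddAbove (Set.range fun w : {w // G.E v w} => G.val W P w.1) := by
      refine ⟨1, ?_⟩
      rintro x ⟨w, rfl⟩
      show G.val W P w.1 ≤ 1
      rw [hvaldef]
      exact ciSup_le fun σ => ciInf_le_of_le (hbddB _ _) (Classical.arbitrary _) (hF1 _ _ _)
    rw [hvaldef v]
    refine le_antisymm (ciSup_le fun σp => ?_) (ciSup_le fun wp => ?_)
    · obtain ⟨σ, hσ⟩ := σp
      have hE0 : G.E v (σ ([v])) := hσ [v] (finitePlay_singleton G v) v rfl hvM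
      refine le_ciSup_of_le hsuccBddA ⟨σ ([v]), hE0⟩ ?_
      refine le_trans (le_ciInf fun ρp => ?_)
        (hvalIinf_le (shiftPlay G σ v (σ ([v]))) (shiftPlay_isMax hσ v _) (σ ([v])))
      obtain ⟨ρ, hρ⟩ := ρp
      have hτc : G.IsMinStrategy (comb G v (dflt G v ([v])) (fun _ => ρ)) :=
        comb_isMin (fun hm => absurd hm (Set.disjoint_left.1 G.disjMm hvM)) (fun _ => hρ)
      refine ciInf_le_of_le (hbddB σ v) ⟨comb G v (dflt G v ([v])) (fun _ => ρ), hτc⟩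
        (le_of_eq ?_)
      rw [collapse_max hW hTail hP hσ hτc hvM]
      have hcg := P_congr hP (shiftPlay_isMax hσ v (σ ([v]))) (shiftPlay_isMin hτc v (σ ([v])))
        (σ₂ := shiftPlay G σ v (σ ([v]))) (τ₂ := ρ) (fun _ _ _ => rfl)
        (fun h hh hhd => shiftPlay_comb_agree v (σ ([v])) _ _ hE0 h hh hhd)
      rw [hcg]
    · obtain ⟨w, hE⟩ := wp
      have hgoal : G.val W P w ≤ ⨆ σ : {σ : List V → V // G.IsMaxStrategy σ},
          ⨅ τ : {τ : List V → V // G.IsMinStrategy τ}, (P σ.1 τ.1 v W).toReal := by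
        rw [hvaldef w]
        refine ciSup_le fun sp => ?_
        obtain ⟨s, hs⟩ := sp
        have hσc : G.IsMaxStrategy (comb G v w (fun _ => s)) :=
          comb_isMax (fun _ => hE) (fun _ => hs)
        refine le_trans (le_ciInf fun τp => ?_) (le_ciSup (hbddA v) ⟨comb G v w (fun _ => s), hσc⟩)
        obtain ⟨τ, hτ⟩ := τp
        refine ciInf_le_of_le (hbddB s w) ⟨shiftPlay G τ v w, shiftPlay_isMin hτ v w⟩
          (le_of_eq ?_)
        rw [collapse_max hW hTail hP hσc hτ hvM]
        have hhead : comb G v w (fun _ => s) ([v]) = w := comb_head G v w _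
        rw [hhead]
        have hcg := P_congr hP (shiftPlay_isMax hσc v w) (shiftPlay_isMin hτ v w)
          (σ₂ := s) (τ₂ := shiftPlay G τ v w)
          (fun h hh hhd => shiftPlay_comb_agree v w w (fun _ => s) hE h hh hhd)
          (fun _ _ _ => rfl)
        rw [hcg]
      exact hgoal
  · -- min vertex
    have hsuccBddB : BddBelow (Set.range fun w : {w // G.E v w} => G.val W P w.1) :=
      ⟨0, by rintro x ⟨w, rfl⟩; exact hval0 _⟩
    refine le_antisymm (le_ciInf fun wp => ?_) ?_
    · obtain ⟨w, hE⟩ := wp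
      rw [hvaldef v]
      refine ciSup_le fun σp => ?_
      obtain ⟨σ, hσ⟩ := σp
      refine le_trans (le_ciInf fun ρp => ?_)
        (hvalIinf_le (shiftPlay G σ v w) (shiftPlay_isMax hσ v w) w)
      obtain ⟨ρ, hρ⟩ := ρp
      have hτc : G.IsMinStrategy (comb G v w (fun _ => ρ)) :=
        comb_isMin (fun _ => hE) (fun _ => hρ)
      refine ciInf_le_of_le (hbddB σ v) ⟨comb G v w (fun _ => ρ), hτc⟩ (le_of_eq ?_)
      rw [collapse_min hW hTail hP hσ hτc hvm]
      have hhead : comb G v w (fun _ => ρ) ([v]) = w := comb_head G v w _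
      rw [hhead]
      have hcg := P_congr hP (shiftPlay_isMax hσ v w) (shiftPlay_isMin hτc v w)
        (σ₂ := shiftPlay G σ v w) (τ₂ := ρ) (fun _ _ _ => rfl)
        (fun h hh hhd => shiftPlay_comb_agree v w w (fun _ => ρ) hE h hh hhd)
      rw [hcg]
    · refine le_of_forall_pos_le_add fun ε hε => ?_
      have hchoice : ∀ w : V, ∃ sp : {σ : List V → V // G.IsMaxStrategy σ},
          G.val W P w - ε < ⨅ τ : {τ : List V → V // G.IsMinStrategy τ},
            (P sp.1 τ.1 w W).toReal := by
        intro w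
        refine exists_lt_of_lt_ciSup ?_
        rw [← hvaldef w]
        exact sub_lt_self _ hε
      choose sfam hsfam using hchoice
      have hσc : G.IsMaxStrategy (comb G v (dflt G v ([v])) (fun w => (sfam w).1)) :=
        comb_isMax (fun hM => absurd hvm (Set.disjoint_left.1 G.disjMm hM))
          (fun w => (sfam w).2)
      have hlow : ∀ τp : {τ : List V → V // G.IsMinStrategy τ},
          (⨅ wp : {w // G.E v w}, G.val W P wp.1) - ε ≤
            (P (comb G v (dflt G v ([v])) (fun w => (sfam w).1)) τp.1 v W).toReal := by
        rintro ⟨τ, hτ⟩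
        have hE1 : G.E v (τ ([v])) := hτ [v] (finitePlay_singleton G v) v rfl hvm
        have heq : (P (comb G v (dflt G v ([v])) (fun w => (sfam w).1)) τ v W).toReal =
            (P (sfam (τ ([v]))).1 (shiftPlay G τ v (τ ([v]))) (τ ([v])) W).toReal := by
          rw [collapse_min hW hTail hP hσc hτ hvm]
          have hcg := P_congr hP (shiftPlay_isMax hσc v (τ ([v])))
            (shiftPlay_isMin hτ v (τ ([v])))
            (σ₂ := (sfam (τ ([v]))).1) (τ₂ := shiftPlay G τ v (τ ([v])))
            (fun h hh hhd => shiftPlay_comb_agree v (τ ([v])) _ _ hE1 h hh hhd)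
            (fun _ _ _ => rfl)
          rw [hcg]
        rw [heq]
        have h1 : G.val W P (τ ([v])) - ε <
            (P (sfam (τ ([v]))).1 (shiftPlay G τ v (τ ([v]))) (τ ([v])) W).toReal :=
          lt_of_lt_of_le (hsfam (τ ([v])))
            (ciInf_le (hbddB _ _) ⟨shiftPlay G τ v (τ ([v])), shiftPlay_isMin hτ v _⟩)
        have h2 : (⨅ wp : {w // G.E v w}, G.val W P wp.1) ≤ G.val W P (τ ([v])) :=
          ciInf_le hsuccBddB ⟨τ ([v]), hE1⟩
        linarith
      have hfin : (⨅ wp : {w // G.E v w}, G.val W P wp.1) - ε ≤ G.val W P v :=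
        le_trans (le_ciInf hlow) (hvalIinf_le _ hσc v)
      linarith
  · -- random vertex
    have hp_nonneg := G.p_nonneg v hvR
    have hp0 : ∀ w : V, ¬ G.E v w → G.p v w = 0 := fun w hw =>
      le_antisymm (not_lt.1 (fun hlt => hw ((G.p_pos_iff v hvR w).1 hlt))) (hp_nonneg w)
    have hsum1 : ∑ w : V, G.p v w = 1 := G.p_sum v hvR
    have hfilter : ∑ w ∈ Finset.univ.filter (fun w => G.E v w), G.p v w * G.val W P w
        = ∑ w : V, G.p v w * G.val W P w := by
      refine Finset.sum_subset (Finset.filter_subset _ _) ?_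
      intro w _ hw
      rw [hp0 w (by simpa using hw), zero_mul]
    rw [hfilter]
    refine le_antisymm ?_ ?_
    · refine le_of_forall_pos_le_add fun ε hε => ?_
      rw [hvaldef v]
      refine ciSup_le fun σp => ?_
      obtain ⟨σ, hσ⟩ := σp
      have hchoice : ∀ w : V, ∃ ρp : {τ : List V → V // G.IsMinStrategy τ},
          (P (shiftPlay G σ v w) ρp.1 w W).toReal < G.val W P w + ε := by
        intro w
        have h1 : (⨅ ρ : {τ : List V → V // G.IsMinStrategy τ},
            (P (shiftPlay G σ v w) ρ.1 w W).toReal) < G.val W P w + ε :=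
          lt_of_le_of_lt (hvalIinf_le _ (shiftPlay_isMax hσ v w) w)
            (lt_add_of_pos_right _ hε)
        exact exists_lt_of_ciInf_lt h1
      choose ρfam hρfam using hchoice
      have hτc : G.IsMinStrategy (comb G v (dflt G v ([v])) (fun w => (ρfam w).1)) :=
        comb_isMin (fun hm => absurd hvR (Set.disjoint_left.1 G.disjmR hm))
          (fun w => (ρfam w).2)
      refine le_trans (ciInf_le (hbddB σ v)
        ⟨comb G v (dflt G v ([v])) (fun w => (ρfam w).1), hτc⟩) ?_
      rw [collapse_R hW hTail hP hσ hτc hvR]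
      have hterm : ∀ w : V, G.p v w * (P (shiftPlay G σ v w)
          (shiftPlay G (comb G v (dflt G v ([v])) (fun w => (ρfam w).1)) v w) w W).toReal
          ≤ G.p v w * (G.val W P w + ε) := by
        intro w
        by_cases hE : G.E v w
        · have heq := P_congr hP (shiftPlay_isMax hσ v w) (shiftPlay_isMin hτc v w)
            (σ₂ := shiftPlay G σ v w) (τ₂ := (ρfam w).1) (fun _ _ _ => rfl)
            (fun h hh hhd => shiftPlay_comb_agree v w _ _ hE h hh hhd)
          rw [heq]
          exact mul_le_mul_of_nonneg_left (le_of_lt (hρfam w)) (hp_nonneg w)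
        · rw [hp0 w hE, zero_mul, zero_mul]
      calc ∑ w : V, G.p v w * (P (shiftPlay G σ v w)
            (shiftPlay G (comb G v (dflt G v ([v])) (fun w => (ρfam w).1)) v w) w W).toReal
          ≤ ∑ w : V, G.p v w * (G.val W P w + ε) := Finset.sum_le_sum (fun w _ => hterm w)
        _ = (∑ w : V, G.p v w * G.val W P w) + ε := by
            rw [Finset.sum_congr rfl (fun w _ => mul_add (G.p v w) _ _),
              Finset.sum_add_distrib, ← Finset.sum_mul, hsum1, one_mul]
    · refine le_of_forall_pos_le_add fun ε hε => ?_
      have hchoice : ∀ w : V, ∃ sp : {σ : List V → V // G.IsMaxStrategy σ},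
          G.val W P w - ε < ⨅ τ : {τ : List V → V // G.IsMinStrategy τ},
            (P sp.1 τ.1 w W).toReal := by
        intro w
        refine exists_lt_of_lt_ciSup ?_
        rw [← hvaldef w]
        exact sub_lt_self _ hε
      choose sfam hsfam using hchoice
      have hσc : G.IsMaxStrategy (comb G v (dflt G v ([v])) (fun w => (sfam w).1)) :=
        comb_isMax (fun hM => absurd hvR (Set.disjoint_left.1 G.disjMR hM))
          (fun w => (sfam w).2)
      have hlow : ∀ τp : {τ : List V → V // G.IsMinStrategy τ},
          (∑ w : V, G.p v w * G.val W P w) - ε ≤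
            (P (comb G v (dflt G v ([v])) (fun w => (sfam w).1)) τp.1 v W).toReal := by
        rintro ⟨τ, hτ⟩
        rw [collapse_R hW hTail hP hσc hτ hvR]
        have hterm : ∀ w : V, G.p v w * (G.val W P w - ε)
            ≤ G.p v w * (P (shiftPlay G (comb G v (dflt G v ([v])) (fun w => (sfam w).1)) v w)
              (shiftPlay G τ v w) w W).toReal := by
          intro w
          by_cases hE : G.E v w
          · have heq := P_congr hP (shiftPlay_isMax hσc v w) (shiftPlay_isMin hτ v w)
              (σ₂ := (sfam w).1) (τ₂ := shiftPlay G τ v w)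
              (fun h hh hhd => shiftPlay_comb_agree v w _ _ hE h hh hhd)
              (fun _ _ _ => rfl)
            rw [heq]
            refine mul_le_mul_of_nonneg_left ?_ (hp_nonneg w)
            exact le_of_lt (lt_of_lt_of_le (hsfam w)
              (ciInf_le (hbddB _ _) ⟨shiftPlay G τ v w, shiftPlay_isMin hτ v w⟩))
          · rw [hp0 w hE, zero_mul, zero_mul]
        calc (∑ w : V, G.p v w * G.val W P w) - ε
            = ∑ w : V, G.p v w * (G.val W P w - ε) := by
              rw [Finset.sum_congr rfl (fun w _ => mul_sub (G.p v w) _ _),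
                Finset.sum_sub_distrib, ← Finset.sum_mul, hsum1, one_mul]
          _ ≤ _ := Finset.sum_le_sum (fun w _ => hterm w)
      have hfin := le_trans (le_ciInf hlow) (hvalIinf_le _ hσc v)
      linarith

end StochasticGames
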